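/- Let k be a subring of ℂ containing all roots of unity and G a finite abelian group. An element Σ_{g∈G} c_g [g] of the group algebra k[G] is a unit if and only if for every group homomorphism χ : G → k^×, the element Σ_{g∈G} c_g χ(g) of k is a unit. -/

import Mathlib

open Finset

section Lift
variable {K : Subring ℂ}
variable {G : Type*} [CommGroup G] [Fintype G]

lemma char_mem (hK : ∀ z : ℂ, (∃ n : ℕ, 0 < n ∧ z ^ n = 1) → z ∈ K)
    (ψ : G →* ℂˣ) (g : G) : ((ψ g : ℂˣ) : ℂ) ∈ K := by
  refine hK _ ⟨Fintype.card G, Fintype.card_pos, ?_⟩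
  have h1 : (ψ g) ^ Fintype.card G = 1 := by rw [← map_pow, pow_card_eq_one, map_one]
  calc (ψ g : ℂ) ^ Fintype.card G = ((ψ g ^ Fintype.card G : ℂˣ) : ℂ) := by
        rw [Units.val_pow_eq_pow_val]
    _ = 1 := by rw [h1, Units.val_one]

/-- lift a complex character to a K-valued character -/
noncomputable def charLift (hK : ∀ z : ℂ, (∃ n : ℕ, 0 < n ∧ z ^ n = 1) → z ∈ K)
    (ψ : G →* ℂˣ) : G →* (↥K)ˣ :=
  MonoidHom.mk'
    (fun g => ⟨⟨(ψ g : ℂ), char_mem hK ψ g⟩,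
      ⟨((ψ g)⁻¹ : ℂˣ), by simpa using char_mem hK ψ g⁻¹⟩,
      by ext; simp, by ext; simp⟩)
    (fun a b => by ext; simp)

lemma charLift_val (hK : ∀ z : ℂ, (∃ n : ℕ, 0 < n ∧ z ^ n = 1) → z ∈ K)
    (ψ : G →* ℂˣ) (g : G) :
    (((charLift hK ψ g : (↥K)ˣ) : ↥K) : ℂ) = (ψ g : ℂ) := rfl

end Lift

section Det
variable {G : Type*} [CommGroup G] [Fintype G] [DecidableEq G] [Fintype (G →* ℂˣ)]

lemma det_circulant (c : G → ℂ) :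
    Matrix.det (Matrix.of fun i j : G => c (i * j⁻¹)) =
      ∏ ψ : G →* ℂˣ, ∑ u : G, c u * ((ψ u⁻¹ : ℂˣ) : ℂ) := by
  have hcard : Fintype.card (G →* ℂˣ) = Fintype.card G := by
    obtain ⟨e⟩ := CommGroup.monoidHom_mulEquiv_of_hasEnoughRootsOfUnity G ℂ
    exact Fintype.card_congr e.toEquiv
  set v : (G →* ℂˣ) → (G → ℂ) := fun ψ => (fun g => ((ψ g : ℂˣ) : ℂ)) with hv
  have li : LinearIndependent ℂ v := by
    have h1 := linearIndependent_monoidHom G ℂ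
    have h2 : v = (fun f : G →* ℂ => ⇑f) ∘ (fun ψ : G →* ℂˣ => (Units.coeHom ℂ).comp ψ) := rfl
    rw [h2]
    exact h1.comp _ (fun ψ₁ ψ₂ h => MonoidHom.ext fun g => Units.ext (DFunLike.congr_fun h g))
  have hfr : Fintype.card (G →* ℂˣ) = Module.finrank ℂ (G → ℂ) := by
    rw [hcard, Module.finrank_pi]
  let b : Module.Basis (G →* ℂˣ) ℂ (G → ℂ) := basisOfLinearIndependentOfCardEqFinrank li hfr
  have hb : ∀ ψ, b ψ = v ψ :=
    fun ψ => congrFun (coe_basisOfLinearIndependentOfCardEqFinrank li hfr) ψ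
  set N : Matrix G G ℂ := Matrix.of fun i j : G => c (i * j⁻¹) with hN
  set μ : (G →* ℂˣ) → ℂ := fun ψ => ∑ u : G, c u * ((ψ u⁻¹ : ℂˣ) : ℂ) with hμ
  have key : ∀ ψ : G →* ℂˣ, Matrix.toLin' N (v ψ) = μ ψ • v ψ := by
    intro ψ
    funext i
    simp only [Matrix.toLin'_apply, Matrix.mulVec, dotProduct, Pi.smul_apply,
      smul_eq_mul, hμ, hN, Matrix.of_apply, hv]
    rw [Finset.sum_mul]
    refine Fintype.sum_equiv ((Equiv.inv G).trans (Equiv.mulLeft i)) _ _ fun j => ?_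
    simp only [Equiv.trans_apply, Equiv.inv_apply, Equiv.coe_mulLeft]
    have hg : (i * j⁻¹)⁻¹ * i = j := by group
    rw [mul_assoc, ← Units.val_mul, ← map_mul, hg]
  have hdiag : LinearMap.toMatrix b b (Matrix.toLin' N) = Matrix.diagonal μ := by
    ext ψ₁ ψ₂
    rw [LinearMap.toMatrix_apply, hb, key, ← hb, map_smul, b.repr_self]
    simp only [Finsupp.smul_single, smul_eq_mul, mul_one, Finsupp.single_apply,
      Matrix.diagonal_apply]
    by_cases h : ψ₁ = ψ₂ <;> simp [h, eq_comm]
  calc N.det = LinearMap.det (Matrix.toLin' N) := (LinearMap.det_toLin' N).symm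
    _ = (LinearMap.toMatrix b b (Matrix.toLin' N)).det := (LinearMap.det_toMatrix b _).symm
    _ = (Matrix.diagonal μ).det := by rw [hdiag]
    _ = ∏ ψ, μ ψ := Matrix.det_diagonal

end Det

set_option maxHeartbeats 1000000 in
set_option synthInstance.maxHeartbeats 400000 in
theorem stmt_16 (K : Subring ℂ) (hK : ∀ z : ℂ, (∃ n : ℕ, 0 < n ∧ z ^ n = 1) → z ∈ K)
    {G : Type*} [CommGroup G] [Fintype G] (x : MonoidAlgebra (↥K) G) :
    IsUnit x ↔ ∀ χ : G →* (↥K)ˣ, IsUnit (∑ g : G, x.coeff g * ((χ g : (↥K)ˣ) : ↥K)) := by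
  classical
  constructor
  · intro hx χ
    have heq : (MonoidAlgebra.lift (↥K) (↥K) G ((Units.coeHom (↥K)).comp χ)) x
        = ∑ g : G, x.coeff g * ((χ g : (↥K)ˣ) : ↥K) := by
      rw [MonoidAlgebra.lift_apply, Finsupp.sum_fintype]
      · rfl
      · intro g; simp
    rw [← heq]
    exact hx.map _
  · intro h
    have hfin : Finite (G →* ℂˣ) := by
      obtain ⟨e⟩ := CommGroup.monoidHom_mulEquiv_of_hasEnoughRootsOfUnity G ℂ
      exact Finite.of_equiv G e.symm.toEquiv
    have : Fintype (G →* ℂˣ) := Fintype.ofFinite _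
    set ι : ↥K →+* ℂ := K.subtype with hι
    have hinj : Function.Injective ι := Subtype.val_injective
    set b : Module.Basis G (↥K) (MonoidAlgebra (↥K) G) :=
      (MonoidAlgebra.basis G (↥K) : Module.Basis G (↥K) (MonoidAlgebra (↥K) G)) with hb
    set L : MonoidAlgebra (↥K) G →ₗ[↥K] MonoidAlgebra (↥K) G :=
      (Algebra.lmul (↥K) (MonoidAlgebra (↥K) G)) x with hL
    set M : Matrix G G (↥K) := Matrix.of fun g h' => x.coeff (g * h'⁻¹) with hMdef
    have hM : LinearMap.toMatrix b b L = M := by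
      refine Matrix.ext fun g h' => ?_
      rw [LinearMap.toMatrix_apply]
      show (x * MonoidAlgebra.single h' (1 : ↥K)).coeff g = x.coeff (g * h'⁻¹)
      rw [MonoidAlgebra.coeff_mul_single_apply, mul_one]
    have h2 : ι M.det = ∏ ψ : G →* ℂˣ, ∑ u : G, ι (x.coeff u) * ((ψ u⁻¹ : ℂˣ) : ℂ) := by
      rw [RingHom.map_det, RingHom.mapMatrix_apply]
      exact det_circulant (fun u => ι (x.coeff u))
    have h3 : ∀ ψ : G →* ℂˣ, (∑ u : G, ι (x.coeff u) * ((ψ u⁻¹ : ℂˣ) : ℂ))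
        = ι (∑ g : G, x.coeff g * ((charLift hK ψ⁻¹ g : (↥K)ˣ) : ↥K)) := by
      intro ψ
      rw [map_sum]
      refine Finset.sum_congr rfl fun u _ => ?_
      rw [map_mul]
      congr 1
      rw [map_inv]
      rfl
    have h4 : M.det = ∏ ψ : G →* ℂˣ, ∑ g : G, x.coeff g * ((charLift hK ψ⁻¹ g : (↥K)ˣ) : ↥K) := by
      apply hinj
      rw [h2, map_prod]
      exact Finset.prod_congr rfl fun ψ _ => h3 ψ
    have hdetU : IsUnit M.det := by
      rw [h4]
      exact Finset.prod_induction _ IsUnit (fun a b => IsUnit.mul) isUnit_one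
        (fun ψ _ => h _)
    have hdet' : IsUnit (LinearMap.toMatrix b b L).det := by
      rw [hM]; exact hdetU
    let e := LinearEquiv.ofIsUnitDet hdet'
    refine IsUnit.of_mul_eq_one (a := x) (e.symm 1) ?_
    have he := e.apply_symm_apply 1
    have he2 : L (e.symm 1) = 1 := by
      rw [show L = (e : MonoidAlgebra (↥K) G →ₗ[↥K] MonoidAlgebra (↥K) G)
        from (LinearEquiv.coe_ofIsUnitDet hdet').symm]
      exact he
    exact he2
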